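/- Fix an integer R ≥ 1, a time step Δt > 0, and set t_r = rΔt for r = 0,…,R. The set W of coefficient vectors a = (a_{r,0}, a_{r,1}, a_{r,2})_{r=0,…,R} ∈ ℝ^{3(R+1)} such that ∑_{r=0}^{R} ( a_{r,0} φ(t_r) + a_{r,1} φ'(t_r) + a_{r,2} φ''(t_r) ) = 0 for every real polynomial φ of degree ≤ 2R+2 is a linear subspace of ℝ^{3(R+1)} of dimension exactly R. -/

import Mathlib

open Polynomial

/-- Hermite-type vanishing: a polynomial of degree ≤ 2R+2 whose value, first and second
derivatives vanish at the R+1 distinct points r·Δt must be zero. -/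
lemma zds_hermite_zero (R : ℕ) (Δt : ℝ) (hΔt : 0 < Δt) (φ : Polynomial ℝ)
    (hdeg : φ.natDegree ≤ 2 * R + 2)
    (h : ∀ r : Fin (R + 1), φ.eval ((r : ℕ) * Δt) = 0 ∧
      φ.derivative.eval ((r : ℕ) * Δt) = 0 ∧
      φ.derivative.derivative.eval ((r : ℕ) * Δt) = 0) : φ = 0 := by
  by_contra hφ
  have hinj : Function.Injective (fun r : Fin (R + 1) => (r : ℕ) * Δt) := by
    intro i j hij
    simp only at hij
    have : ((i : ℕ) : ℝ) = ((j : ℕ) : ℝ) := by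
      exact mul_right_cancel₀ hΔt.ne' hij
    exact Fin.ext (Nat.cast_injective this)
  have hdvd : (∏ r : Fin (R + 1), (X - C ((r : ℕ) * Δt)) ^ 3) ∣ φ := by
    apply Finset.prod_dvd_of_coprime
    · intro i _ j _ hij
      exact ((pairwise_coprime_X_sub_C hinj) hij).pow
    · intro r _
      rw [← le_rootMultiplicity_iff hφ]
      have := lt_rootMultiplicity_of_isRoot_iterate_derivative (t := (r : ℕ) * Δt)
        (n := 2) hφ ?_
      · omega
      · intro m hm
        interval_cases m
        · exact (h r).1
        · exact (h r).2.1
        · exact (h r).2.2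
  have hdle := Polynomial.natDegree_le_of_dvd hdvd hφ
  have hpn : (∏ r : Fin (R + 1), (X - C ((r : ℕ) * Δt)) ^ 3).natDegree = 3 * (R + 1) := by
    rw [Polynomial.natDegree_prod]
    · simp only [Polynomial.natDegree_pow, Polynomial.natDegree_X_sub_C, mul_one,
        Finset.sum_const, Finset.card_univ, Fintype.card_fin, smul_eq_mul]
      ring
    · intro r _
      exact pow_ne_zero _ (X_sub_C_ne_zero _)
  omega

noncomputable def zdsE0 (R : ℕ) (Δt : ℝ) : Polynomial ℝ →ₗ[ℝ] (Fin (R + 1) → ℝ × ℝ × ℝ) where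
  toFun φ := fun r => (φ.eval ((r : ℕ) * Δt), φ.derivative.eval ((r : ℕ) * Δt),
    φ.derivative.derivative.eval ((r : ℕ) * Δt))
  map_add' p q := by
    funext r
    simp [Prod.ext_iff]
  map_smul' c p := by
    funext r
    simp [Prod.ext_iff, Prod.smul_def]

noncomputable def zdsD (R : ℕ) :
    (Fin (R + 1) → ℝ × ℝ × ℝ) →ₗ[ℝ] Module.Dual ℝ (Fin (R + 1) → ℝ × ℝ × ℝ) where
  toFun a :=
    { toFun := fun x => ∑ r, ((a r).1 * (x r).1 + (a r).2.1 * (x r).2.1 + (a r).2.2 * (x r).2.2)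
      map_add' := fun x y => by
        simp only [Pi.add_apply, Prod.fst_add, Prod.snd_add, ← Finset.sum_add_distrib]
        exact Finset.sum_congr rfl fun r _ => by ring
      map_smul' := fun c x => by
        simp only [Pi.smul_apply, Prod.smul_fst, Prod.smul_snd, smul_eq_mul, RingHom.id_apply,
          Finset.mul_sum]
        exact Finset.sum_congr rfl fun r _ => by ring }
  map_add' a b := by
    refine LinearMap.ext fun x => ?_
    simp only [LinearMap.coe_mk, AddHom.coe_mk, LinearMap.add_apply, Pi.add_apply, Prod.fst_add,
      Prod.snd_add, ← Finset.sum_add_distrib]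
    exact Finset.sum_congr rfl fun r _ => by ring
  map_smul' c a := by
    refine LinearMap.ext fun x => ?_
    simp only [LinearMap.coe_mk, AddHom.coe_mk, LinearMap.smul_apply, Pi.smul_apply, Prod.smul_fst,
      Prod.smul_snd, smul_eq_mul, RingHom.id_apply, Finset.mul_sum]
    exact Finset.sum_congr rfl fun r _ => by ring

lemma zdsD_injective (R : ℕ) : Function.Injective (zdsD R) := by
  rw [← LinearMap.ker_eq_bot, Submodule.eq_bot_iff]
  intro a ha
  rw [LinearMap.mem_ker] at ha
  have h0 : ∑ r : Fin (R + 1),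
      ((a r).1 * (a r).1 + (a r).2.1 * (a r).2.1 + (a r).2.2 * (a r).2.2) = 0 := by
    have h0' := DFunLike.congr_fun ha a
    simpa [zdsD] using h0'
  have hterm : ∀ r : Fin (R + 1),
      (a r).1 * (a r).1 + (a r).2.1 * (a r).2.1 + (a r).2.2 * (a r).2.2 = 0 := by
    have := (Finset.sum_eq_zero_iff_of_nonneg (fun r _ => by nlinarith [mul_self_nonneg (a r).1, mul_self_nonneg (a r).2.1, mul_self_nonneg (a r).2.2])).mp h0
    exact fun r => this r (Finset.mem_univ r)
  funext r
  have h := hterm r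
  have h1 : (a r).1 = 0 := by nlinarith [mul_self_nonneg (a r).1, mul_self_nonneg (a r).2.1, mul_self_nonneg (a r).2.2]
  have h2 : (a r).2.1 = 0 := by nlinarith [mul_self_nonneg (a r).1, mul_self_nonneg (a r).2.1, mul_self_nonneg (a r).2.2]
  have h3 : (a r).2.2 = 0 := by nlinarith [mul_self_nonneg (a r).1, mul_self_nonneg (a r).2.1, mul_self_nonneg (a r).2.2]
  show a r = (0 : ℝ × ℝ × ℝ)
  exact Prod.ext h1 (Prod.ext h2 h3)


/-- For `R ≥ 1` and `Δt > 0`, with grid points `t_r = r·Δt`, the set of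
coefficient vectors `a = (a_{r,0}, a_{r,1}, a_{r,2})_{r=0,…,R}` such that
`∑_r (a_{r,0} φ(t_r) + a_{r,1} φ'(t_r) + a_{r,2} φ''(t_r)) = 0` for every real polynomial
`φ` of degree `≤ 2R+2` is a linear subspace of `ℝ^{3(R+1)}` of dimension exactly `R`. -/
theorem zds_structural_space_dim (R : ℕ) (hR : 1 ≤ R) (Δt : ℝ) (hΔt : 0 < Δt) :
    ∃ W : Submodule ℝ (Fin (R + 1) → ℝ × ℝ × ℝ),
      (∀ a : Fin (R + 1) → ℝ × ℝ × ℝ,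
        a ∈ W ↔ ∀ φ : Polynomial ℝ, φ.natDegree ≤ 2 * R + 2 →
          ∑ r : Fin (R + 1),
            ((a r).1 * φ.eval ((r : ℕ) * Δt)
              + (a r).2.1 * φ.derivative.eval ((r : ℕ) * Δt)
              + (a r).2.2 * φ.derivative.derivative.eval ((r : ℕ) * Δt)) = 0) ∧
      Module.finrank ℝ W = R := by
  classical
  set V : Submodule ℝ (Polynomial ℝ) := Polynomial.degreeLT ℝ (2 * R + 3) with hV
  haveI : FiniteDimensional ℝ V := (Polynomial.degreeLTEquiv ℝ (2 * R + 3)).symm.finiteDimensional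
  have hVfr : Module.finrank ℝ V = 2 * R + 3 := by
    rw [(Polynomial.degreeLTEquiv ℝ (2 * R + 3)).finrank_eq, Module.finrank_fin_fun]
  set E : V →ₗ[ℝ] (Fin (R + 1) → ℝ × ℝ × ℝ) := (zdsE0 R Δt) ∘ₗ V.subtype with hE
  -- membership in degreeLT vs natDegree bound
  have hmemV : ∀ φ : Polynomial ℝ, φ.natDegree ≤ 2 * R + 2 → φ ∈ V := by
    intro φ hφ
    rw [hV, Polynomial.mem_degreeLT]
    calc φ.degree ≤ (φ.natDegree : WithBot ℕ) := Polynomial.degree_le_natDegree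
      _ < ((2 * R + 3 : ℕ) : WithBot ℕ) := by exact_mod_cast Nat.lt_succ_of_le hφ
  have hdegV : ∀ φ : V, (φ : Polynomial ℝ).natDegree ≤ 2 * R + 2 := by
    intro φ
    by_cases h0 : (φ : Polynomial ℝ) = 0
    · simp [h0]
    · have hmem : (φ : Polynomial ℝ) ∈ Polynomial.degreeLT ℝ (2 * R + 3) := φ.2
      rw [Polynomial.mem_degreeLT] at hmem
      have := (Polynomial.natDegree_lt_iff_degree_lt h0).mpr (by exact_mod_cast hmem)
      omega
  -- E is injective (Hermite interpolation)
  have hEinj : Function.Injective E := by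
    rw [← LinearMap.ker_eq_bot, Submodule.eq_bot_iff]
    intro φ hφ
    rw [LinearMap.mem_ker] at hφ
    have hz : (φ : Polynomial ℝ) = 0 := by
      refine zds_hermite_zero R Δt hΔt _ (hdegV φ) fun r => ?_
      have := congrFun hφ r
      simp only [hE, LinearMap.coe_comp, Function.comp_apply, Submodule.coe_subtype, zdsE0,
        LinearMap.coe_mk, AddHom.coe_mk, Pi.zero_apply] at this
      exact ⟨congrArg Prod.fst this, congrArg (Prod.fst ∘ Prod.snd) this,
        congrArg (Prod.snd ∘ Prod.snd) this⟩
    exact Subtype.ext hz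
  set T : (Fin (R + 1) → ℝ × ℝ × ℝ) →ₗ[ℝ] Module.Dual ℝ V := E.dualMap ∘ₗ zdsD R with hT
  refine ⟨LinearMap.ker T, fun a => ?_, ?_⟩
  · constructor
    · intro ha φ hφ
      rw [LinearMap.mem_ker] at ha
      have := DFunLike.congr_fun ha (⟨φ, hmemV φ hφ⟩ : V)
      simpa [hT, zdsD, hE, zdsE0] using this
    · intro h
      rw [LinearMap.mem_ker]
      refine LinearMap.ext fun φ => ?_
      have := h (φ : Polynomial ℝ) (hdegV φ)
      simpa [hT, zdsD, hE, zdsE0] using this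
  · -- dimension count
    have hDsurj : Function.Surjective (zdsD R) := by
      have := (LinearMap.injective_iff_surjective_of_finrank_eq_finrank
        (f := zdsD R) (Subspace.dual_finrank_eq (V := Fin (R + 1) → ℝ × ℝ × ℝ)).symm).mp
      exact this (zdsD_injective R)
    have hTsurj : Function.Surjective T :=
      (LinearMap.dualMap_surjective_of_injective hEinj).comp hDsurj
    have hrange : LinearMap.range T = ⊤ := LinearMap.range_eq_top.mpr hTsurj
    have hrn := LinearMap.finrank_range_add_finrank_ker T
    rw [hrange] at hrn
    have hdualV : Module.finrank ℝ (Module.Dual ℝ V) = 2 * R + 3 := by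
      rw [Subspace.dual_finrank_eq, hVfr]
    have hdom : Module.finrank ℝ (Fin (R + 1) → ℝ × ℝ × ℝ) = 3 * (R + 1) := by
      simp [Module.finrank_pi_fintype, Module.finrank_prod]
      ring
    rw [finrank_top, hdualV, hdom] at hrn
    omega
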